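/- Let μ be a positive Borel measure on V* supported in a set whose closed convex hull C_μ contains no affine line, and suppose μ is tempered (i.e., ∫ (1+‖α‖²)^{−k} dμ(α) < ∞ for some k). Then for every x in the interior of the cone B(C_μ) = {v : inf ⟨C_μ, v⟩ > −∞}, the Laplace transform L(μ)(x) = ∫ e^{−α(x)} dμ(α) is finite. -/

import Mathlib

open MeasureTheory
open scoped ENNReal

/-- The support of a Borel measure: points all of whose open neighborhoods
have positive measure. -/
def msupport {W : Type*} [TopologicalSpace W] [MeasurableSpace W]
    (μ : Measure W) : Set W :=
  {x | ∀ U : Set W, IsOpen U → x ∈ U → μ U ≠ 0}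



lemma msupport_compl_null {W : Type*} [TopologicalSpace W]
    [SecondCountableTopology W] [MeasurableSpace W]
    (μ : Measure W) : μ (msupport μ)ᶜ = 0 := by
  set S : Set (Set W) := {U | IsOpen U ∧ μ U = 0} with hS
  obtain ⟨T, hTc, hTS, hTeq⟩ := TopologicalSpace.isOpen_sUnion_countable S
    (fun U hU => hU.1)
  have h0 : μ (⋃₀ S) = 0 := by
    rw [← hTeq]
    exact (measure_sUnion_null_iff hTc).mpr fun s hs => (hTS hs).2
  refine measure_mono_null (fun y hy => ?_) h0
  simp only [msupport, Set.mem_compl_iff, Set.mem_setOf_eq, not_forall] at hy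
  obtain ⟨U, hUo, hyU, hμU⟩ := hy
  exact ⟨U, ⟨hUo, not_not.mp hμU⟩, hyU⟩

lemma poly_le_exp (k : ℕ) {c : ℝ} (hc : 0 < c) {t : ℝ} (ht : 0 ≤ t) :
    (1 + t ^ 2) ^ k ≤ (max 1 (2 * k / c)) ^ (2 * k) * Real.exp (c * t) := by
  rcases Nat.eq_zero_or_pos k with hk | hk
  · subst hk
    simpa using Real.one_le_exp (by positivity)
  · set M := max 1 (2 * k / c) with hM
    have hM1 : (1 : ℝ) ≤ M := le_max_left _ _
    have hk' : (0 : ℝ) < 2 * k := by positivity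
    have h1 : 1 + t ^ 2 ≤ (1 + t) ^ 2 := by nlinarith
    have h2 : 1 + t ≤ M * Real.exp (c * t / (2 * k)) := by
      have hMt : 1 + t ≤ M * (1 + c * t / (2 * k)) := by
        have h3 : (2 * (k : ℝ) / c) * (c / (2 * k)) = 1 := by
          field_simp
        have h4 : M * (c / (2 * k)) ≥ 1 := by
          calc (1:ℝ) = (2 * (k : ℝ) / c) * (c / (2 * k)) := h3.symm
            _ ≤ M * (c / (2 * k)) := by
                apply mul_le_mul_of_nonneg_right (le_max_right _ _)
                positivity
        have h5 : t * 1 ≤ t * (M * (c / (2 * k))) :=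
          mul_le_mul_of_nonneg_left h4 ht
        have h6 : M * (1 + c * t / (2 * k)) = M + t * (M * (c / (2 * k))) := by
          ring
        linarith
      refine hMt.trans ?_
      have := Real.add_one_le_exp (c * t / (2 * k))
      nlinarith [Real.exp_pos (c * t / (2 * k))]
    calc (1 + t ^ 2) ^ k ≤ ((1 + t) ^ 2) ^ k := by
          apply pow_le_pow_left₀ (by positivity) h1
      _ = (1 + t) ^ (2 * k) := by rw [← pow_mul]
      _ ≤ (M * Real.exp (c * t / (2 * k))) ^ (2 * k) := by
          apply pow_le_pow_left₀ (by positivity) h2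
      _ = M ^ (2 * k) * Real.exp (c * t / (2 * k)) ^ (2 * k) := by
          rw [mul_pow]
      _ = M ^ (2 * k) * Real.exp (c * t) := by
          rw [← Real.exp_nat_mul]
          congr 1
          push_cast; congr 1
          rw [mul_div_assoc', mul_div_cancel_left₀ _ hk'.ne']

theorem tempered_laplace_finite_on_interior {V : Type*} [NormedAddCommGroup V]
    [NormedSpace ℝ V] [FiniteDimensional ℝ V]
    [MeasurableSpace (V →L[ℝ] ℝ)] [BorelSpace (V →L[ℝ] ℝ)]
    (μ : Measure (V →L[ℝ] ℝ))
    (Cμ : Set (V →L[ℝ] ℝ)) (hCμ : Cμ = closure (convexHull ℝ (msupport μ)))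
    (hline : ¬ ∃ (a b : V →L[ℝ] ℝ), b ≠ 0 ∧ ∀ t : ℝ, a + t • b ∈ Cμ)
    (htemp : ∃ k : ℕ, ∫⁻ α, (ENNReal.ofReal ((1 + ‖α‖ ^ 2) ^ k))⁻¹ ∂μ < ⊤)
    (x : V) (hx : x ∈ interior {v : V | ∃ m : ℝ, ∀ α ∈ Cμ, m ≤ α v}) :
    ∫⁻ α, ENNReal.ofReal (Real.exp (-(α x))) ∂μ < ⊤ := by
  clear hline
  obtain ⟨k, hk⟩ := htemp
  classical
  set n := Module.finrank ℝ V with hn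
  let b : Module.Basis (Fin n) ℝ V := Module.finBasis ℝ V
  rw [mem_interior_iff_mem_nhds, Metric.mem_nhds_iff] at hx
  obtain ⟨ε, hε, hball⟩ := hx
  obtain ⟨m0, hm0⟩ : ∃ m : ℝ, ∀ α ∈ Cμ, m ≤ α x := hball (Metric.mem_ball_self hε)
  have hdir : ∀ u : V, ‖u‖ < ε → ∃ m : ℝ, ∀ α ∈ Cμ, m ≤ α (x + u) := by
    intro u hu
    refine hball ?_
    rw [Metric.mem_ball, dist_eq_norm]
    simpa using hu
  have hbne : ∀ i, (0:ℝ) < ‖b i‖ := fun i => norm_pos_iff.mpr (b.ne_zero i)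
  set t : Fin n → ℝ := fun i => ε / (2 * ‖b i‖) with ht
  have htpos : ∀ i, 0 < t i := fun i => div_pos hε (mul_pos two_pos (hbne i))
  have hunorm : ∀ i, ‖t i • b i‖ < ε := by
    intro i
    rw [norm_smul, Real.norm_eq_abs, abs_of_pos (htpos i)]
    have hne : ‖b i‖ ≠ 0 := ne_of_gt (hbne i)
    have h : t i * ‖b i‖ = ε / 2 := by
      simp only [ht]
      field_simp
    rw [h]; linarith
  choose mp hmp using fun i => hdir (t i • b i) (hunorm i)
  have hunorm' : ∀ i, ‖-(t i • b i)‖ < ε := by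
    intro i; rw [norm_neg]; exact hunorm i
  choose mm hmm using fun i => hdir (-(t i • b i)) (hunorm' i)
  set m : ℝ := min m0 (⨅ i, min (mp i) (mm i)) with hm
  have hmle0 : m ≤ m0 := min_le_left _ _
  have hmlei : ∀ i, m ≤ min (mp i) (mm i) := fun i =>
    (min_le_right _ _).trans (ciInf_le (Finite.bddBelow_range _) i)
  set S : ℝ := ∑ j, ‖b j‖ with hS
  have hS0 : 0 ≤ S := Finset.sum_nonneg fun j _ => norm_nonneg _
  obtain ⟨C, hC, hCb⟩ := b.exists_opNorm_le (F := ℝ)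
  set K : ℝ := max 1 (C * ((2 / ε) * S)) with hK
  have hK1 : (1:ℝ) ≤ K := le_max_left _ _
  have hKpos : (0:ℝ) < K := lt_of_lt_of_le one_pos hK1
  set c : ℝ := K⁻¹ with hc
  have hcpos : 0 < c := inv_pos.mpr hKpos
  have key : ∀ α ∈ Cμ, m + c * ‖α‖ ≤ α x := by
    intro α hα
    have hge0 : 0 ≤ α x - m := by have := hm0 α hα; linarith
    have hbi : ∀ i, ‖α (b i)‖ ≤ (α x - m) * ((2 / ε) * S) := by
      intro i
      have he1 : α (x + t i • b i) = α x + t i * α (b i) := by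
        rw [map_add, α.map_smul, smul_eq_mul]
      have he2 : α (x + -(t i • b i)) = α x - t i * α (b i) := by
        rw [map_add, map_neg, α.map_smul, smul_eq_mul]; ring
      have h1 : m ≤ α x + t i * α (b i) := by
        have := hmp i α hα
        rw [he1] at this
        have h' := (hmlei i).trans (min_le_left _ _)
        linarith
      have h2 : m ≤ α x - t i * α (b i) := by
        have := hmm i α hα
        rw [he2] at this
        have h' := (hmlei i).trans (min_le_right _ _)
        linarith
      have habs : t i * |α (b i)| ≤ α x - m := by
        rcases abs_cases (α (b i)) with ⟨h, _⟩ | ⟨h, _⟩ <;> rw [h]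
        · linarith
        · rw [mul_neg]; linarith
      have h3 : |α (b i)| ≤ (α x - m) / t i := by
        rw [le_div_iff₀ (htpos i), mul_comm]
        exact habs
      have h4 : (t i)⁻¹ ≤ (2 / ε) * S := by
        have hbS : ‖b i‖ ≤ S :=
          Finset.single_le_sum (fun j _ => norm_nonneg (b j)) (Finset.mem_univ i)
        have : t i = ε / (2 * ‖b i‖) := rfl
        rw [this, inv_div]
        calc 2 * ‖b i‖ / ε ≤ 2 * S / ε := by gcongr
          _ = (2 / ε) * S := by ring
      calc ‖α (b i)‖ = |α (b i)| := Real.norm_eq_abs _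
        _ ≤ (α x - m) / t i := h3
        _ = (α x - m) * (t i)⁻¹ := div_eq_mul_inv _ _
        _ ≤ (α x - m) * ((2 / ε) * S) := mul_le_mul_of_nonneg_left h4 hge0
    have hM0 : 0 ≤ (α x - m) * ((2 / ε) * S) :=
      mul_nonneg hge0 (by positivity)
    have hnorm : ‖α‖ ≤ C * ((α x - m) * ((2 / ε) * S)) := hCb hM0 hbi
    have hnorm' : ‖α‖ ≤ (α x - m) * K := by
      calc ‖α‖ ≤ C * ((α x - m) * ((2 / ε) * S)) := hnorm
        _ = (α x - m) * (C * ((2 / ε) * S)) := by ring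
        _ ≤ (α x - m) * K := mul_le_mul_of_nonneg_left (le_max_right _ _) hge0
    have : c * ‖α‖ ≤ α x - m := by
      have h5 : c * ‖α‖ ≤ c * ((α x - m) * K) :=
        mul_le_mul_of_nonneg_left hnorm' (le_of_lt hcpos)
      have h6 : c * ((α x - m) * K) = α x - m := by
        rw [hc]; field_simp
      linarith
    linarith
  set CM : ℝ := (max 1 (2 * k / c)) ^ (2 * k) with hCM
  have hCM0 : (0:ℝ) < CM := by positivity
  have hsub : msupport μ ⊆ Cμ := by
    rw [hCμ]; exact (subset_convexHull ℝ _).trans subset_closure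
  have hae : ∀ᵐ α ∂μ, α ∈ msupport μ := by
    rw [MeasureTheory.ae_iff]
    exact msupport_compl_null μ
  have hpt : ∀ α ∈ msupport μ,
      ENNReal.ofReal (Real.exp (-(α x))) ≤
        ENNReal.ofReal (Real.exp (-m) * CM) * (ENNReal.ofReal ((1 + ‖α‖ ^ 2) ^ k))⁻¹ := by
    intro α hα
    have hkey := key α (hsub hα)
    have hp : (0:ℝ) < (1 + ‖α‖ ^ 2) ^ k := by positivity
    have hreal : Real.exp (-(α x)) ≤ (Real.exp (-m) * CM) * ((1 + ‖α‖ ^ 2) ^ k)⁻¹ := by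
      rw [← div_eq_mul_inv, le_div_iff₀ hp]
      have hpoly := poly_le_exp k hcpos (norm_nonneg α)
      calc Real.exp (-(α x)) * (1 + ‖α‖ ^ 2) ^ k
          ≤ Real.exp (-(α x)) * (CM * Real.exp (c * ‖α‖)) :=
            mul_le_mul_of_nonneg_left hpoly (Real.exp_pos _).le
        _ = CM * (Real.exp (-(α x)) * Real.exp (c * ‖α‖)) := by ring
        _ = CM * Real.exp (c * ‖α‖ - α x) := by
            rw [← Real.exp_add]; congr 1; ring
        _ ≤ CM * Real.exp (-m) :=
            mul_le_mul_of_nonneg_left (Real.exp_le_exp.mpr (by linarith)) hCM0.le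
        _ = Real.exp (-m) * CM := mul_comm _ _
    calc ENNReal.ofReal (Real.exp (-(α x)))
        ≤ ENNReal.ofReal ((Real.exp (-m) * CM) * ((1 + ‖α‖ ^ 2) ^ k)⁻¹) :=
          ENNReal.ofReal_le_ofReal hreal
      _ = ENNReal.ofReal (Real.exp (-m) * CM) * ENNReal.ofReal (((1 + ‖α‖ ^ 2) ^ k)⁻¹) :=
          ENNReal.ofReal_mul (by positivity)
      _ = ENNReal.ofReal (Real.exp (-m) * CM) * (ENNReal.ofReal ((1 + ‖α‖ ^ 2) ^ k))⁻¹ := by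
          rw [ENNReal.ofReal_inv_of_pos hp]
  calc ∫⁻ α, ENNReal.ofReal (Real.exp (-(α x))) ∂μ
      ≤ ∫⁻ α, ENNReal.ofReal (Real.exp (-m) * CM) *
          (ENNReal.ofReal ((1 + ‖α‖ ^ 2) ^ k))⁻¹ ∂μ :=
        lintegral_mono_ae (hae.mono fun α hα => hpt α hα)
    _ = ENNReal.ofReal (Real.exp (-m) * CM) *
          ∫⁻ α, (ENNReal.ofReal ((1 + ‖α‖ ^ 2) ^ k))⁻¹ ∂μ :=
        lintegral_const_mul' _ _ ENNReal.ofReal_ne_top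
    _ < ⊤ := ENNReal.mul_lt_top ENNReal.ofReal_lt_top hk
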